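/- If a finitely right generated cell space R with finite stabiliser G₀ has sub-exponential growth (equivalently its S-growth rate λ_S equals 1 for a finite symmetric right generating set S), then for every ε > 0 there is a non-empty finite subset F ⊆ M such that for every s ∈ S, |F \ (· ⊲ s)^{-1}(F)| / |F| < ε; in fact some ball B_S(k) works as F. -/

import Mathlib

open MulAction Pointwise Filter

/-- A cell space: a transitive left `G`-set `M` with a choice of base point `m0`
and coordinates `coord m` satisfying `coord m • m0 = m`. -/
structure CellSpace (G M : Type*) [Group G] [MulAction G M] where
  m0 : M
  coord : M → G
  coord_spec : ∀ m : M, coord m • m0 = m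

namespace CellSpace

variable {G M : Type*} [Group G] [MulAction G M] (R : CellSpace G M)

/-- The stabiliser `G₀` of the base point. -/
def G0 : Subgroup G := MulAction.stabilizer G R.m0

/-- The induced right quotient-set semi-action `m ⊲ gG₀ = (coord m * g) • m₀`. -/
def rsa (m : M) (q : G ⧸ R.G0) : M :=
  Quotient.liftOn' q (fun g => (R.coord m * g) • R.m0) (by
    intro a b h
    have hab : a⁻¹ * b ∈ R.G0 := QuotientGroup.leftRel_apply.mp h
    have hm : (a⁻¹ * b) • R.m0 = R.m0 := hab
    have hba : b • R.m0 = a • R.m0 := by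
      calc b • R.m0 = a • (a⁻¹ * b) • R.m0 := by rw [← mul_smul]; group
        _ = a • R.m0 := by rw [hm]
    simp only [mul_smul, hba])

/-- `S⁻¹ = {g⁻¹G₀ : s ∈ S, g ∈ s}`. -/
def sinv (S : Set (G ⧸ R.G0)) : Set (G ⧸ R.G0) :=
  {x | ∃ g : G, ((g : G ⧸ R.G0) ∈ S) ∧ x = ((g⁻¹ : G) : G ⧸ R.G0)}

/-- Iterated application of the right semi-action along a word. -/
def apply (m : M) (l : List (G ⧸ R.G0)) : M := l.foldl R.rsa m

/-- `S` right generates `R`: every point is reachable from `m₀` by a word over `S ∪ S⁻¹`. -/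
def RightGenerates (S : Set (G ⧸ R.G0)) : Prop :=
  ∀ m : M, ∃ l : List (G ⧸ R.G0), (∀ s ∈ l, s ∈ S ∪ R.sinv S) ∧ R.apply R.m0 l = m

/-- `G₀ · S ⊆ S`. -/
def Saturated (S : Set (G ⧸ R.G0)) : Prop :=
  ∀ g₀ ∈ R.G0, ∀ s ∈ S, g₀ • s ∈ S

/-- `S` is symmetric: `S⁻¹ ⊆ S`. -/
def Symm (S : Set (G ⧸ R.G0)) : Prop := R.sinv S ⊆ S

/-- The `S`-metric: the least length of a word over `S` taking `m` to `m'`. -/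
noncomputable def dist (S : Set (G ⧸ R.G0)) (m m' : M) : ℕ :=
  sInf {k | ∃ l : List (G ⧸ R.G0), l.length = k ∧ (∀ s ∈ l, s ∈ S) ∧ R.apply m l = m'}

/-- The ball of radius `ρ` centred at `m` in the `S`-metric. -/
def ball (S : Set (G ⧸ R.G0)) (m : M) (ρ : ℕ) : Set M :=
  {m' | R.dist S m m' ≤ ρ}

/-- The sphere of radius `ρ` centred at `m` in the `S`-metric. -/
def sphere (S : Set (G ⧸ R.G0)) (m : M) (ρ : ℕ) : Set M :=
  {m' | R.dist S m m' = ρ}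

/-- The semi-action of `M` on itself under the identification `m ↦ G_{m₀,m}`. -/
noncomputable def rsaM (m m' : M) : M := R.rsa m ((R.coord m' : G) : G ⧸ R.G0)

end CellSpace

section Aux

variable {G M : Type*} [Group G] [MulAction G M] (R : CellSpace G M)
variable (S : Set (G ⧸ R.G0))

lemma mem_ball_iff (m : M) (ρ : ℕ) : m ∈ R.ball S R.m0 ρ ↔ R.dist S R.m0 m ≤ ρ :=
  Iff.rfl

lemma distSet_nonempty (hsym : R.Symm S) (hgen : R.RightGenerates S) (m : M) :
    {k | ∃ l : List (G ⧸ R.G0), l.length = k ∧ (∀ s ∈ l, s ∈ S) ∧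
      R.apply R.m0 l = m}.Nonempty := by
  obtain ⟨l, hl, happ⟩ := hgen m
  exact ⟨l.length, l, rfl, fun s hs => (hl s hs).elim id (fun h => hsym h), happ⟩

lemma dist_attained (hsym : R.Symm S) (hgen : R.RightGenerates S) (m : M) :
    ∃ l : List (G ⧸ R.G0), l.length = R.dist S R.m0 m ∧ (∀ s ∈ l, s ∈ S) ∧
      R.apply R.m0 l = m :=
  Nat.sInf_mem (distSet_nonempty R S hsym hgen m)

lemma cs_dist_self (m : M) : R.dist S m m = 0 :=
  Nat.le_zero.mp (Nat.sInf_le ⟨[], rfl, by simp, rfl⟩)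

lemma mem_ball_self (ρ : ℕ) : R.m0 ∈ R.ball S R.m0 ρ := by
  rw [mem_ball_iff]
  rw [cs_dist_self]
  exact Nat.zero_le _

lemma dist_le_length (m : M) (l : List (G ⧸ R.G0)) (hl : ∀ s ∈ l, s ∈ S) :
    R.dist S m (R.apply m l) ≤ l.length :=
  Nat.sInf_le ⟨l, rfl, hl, rfl⟩

lemma apply_append (m : M) (l l' : List (G ⧸ R.G0)) :
    R.apply m (l ++ l') = R.apply (R.apply m l) l' :=
  List.foldl_append ..

lemma dist_rsa_le (hsym : R.Symm S) (hgen : R.RightGenerates S) (m : M) {s : G ⧸ R.G0}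
    (hs : s ∈ S) : R.dist S R.m0 (R.rsa m s) ≤ R.dist S R.m0 m + 1 := by
  obtain ⟨l, hlen, hmem, happ⟩ := dist_attained R S hsym hgen m
  have key : R.apply R.m0 (l ++ [s]) = R.rsa m s := by
    rw [apply_append, happ]; rfl
  calc R.dist S R.m0 (R.rsa m s) ≤ (l ++ [s]).length := by
        rw [← key]
        refine dist_le_length R S R.m0 _ ?_
        intro t ht
        rcases List.mem_append.mp ht with h | h
        · exact hmem t h
        · simp only [List.mem_singleton] at h; subst h; exact hs
    _ = R.dist S R.m0 m + 1 := by simp [hlen]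

lemma ball_mono {ρ ρ' : ℕ} (h : ρ ≤ ρ') : R.ball S R.m0 ρ ⊆ R.ball S R.m0 ρ' :=
  fun _ hm => le_trans hm h

lemma ball_finite (hS : S.Finite) (hsym : R.Symm S) (hgen : R.RightGenerates S) :
    ∀ ρ : ℕ, (R.ball S R.m0 ρ).Finite := by
  intro ρ
  induction ρ with
  | zero =>
    apply Set.Finite.subset (Set.finite_singleton R.m0)
    intro m hm
    obtain ⟨l, hlen, _, happ⟩ := dist_attained R S hsym hgen m
    have h0 : R.dist S R.m0 m = 0 := Nat.le_zero.mp hm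
    have : l = [] := List.length_eq_zero_iff.mp (by rw [hlen, h0])
    subst this
    simpa [CellSpace.apply] using happ.symm
  | succ ρ ih =>
    have hsub : R.ball S R.m0 (ρ + 1) ⊆
        R.ball S R.m0 ρ ∪ ⋃ s ∈ S, (fun m => R.rsa m s) '' R.ball S R.m0 ρ := by
      intro m hm
      obtain ⟨l, hlen, hmem, happ⟩ := dist_attained R S hsym hgen m
      rcases List.eq_nil_or_concat l with rfl | ⟨l', s, rfl⟩
      · left
        rw [mem_ball_iff, ← happ]
        show R.dist S R.m0 R.m0 ≤ ρ
        rw [cs_dist_self]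
        exact Nat.zero_le _
      · right
        simp only [List.concat_eq_append] at hlen hmem happ
        have hms : s ∈ S := hmem s (by simp)
        have hlen' : l'.length ≤ ρ := by
          have h1 : R.dist S R.m0 m ≤ ρ + 1 := hm
          simp only [List.length_append, List.length_singleton] at hlen
          omega
        have hball : R.apply R.m0 l' ∈ R.ball S R.m0 ρ := by
          rw [mem_ball_iff]
          exact le_trans (dist_le_length R S R.m0 l' (fun t ht => hmem t (by simp [ht])))
            hlen'
        refine Set.mem_biUnion hms ⟨R.apply R.m0 l', hball, ?_⟩
        rw [← happ, apply_append]
        rfl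
    exact Set.Finite.subset
      (ih.union (hS.biUnion (fun s _ => ih.image _))) hsub

end Aux

/-- If a finitely right generated cell space with finite stabiliser has
sub-exponential growth (`λ_S = 1`), then for every `ε > 0` some ball `F = B_S(k)`
satisfies `|F \ (· ⊲ s)⁻¹(F)| / |F| < ε` for every `s ∈ S`. -/
theorem stmt19 {G M : Type*} [Group G] [MulAction G M] (R : CellSpace G M)
    (S : Set (G ⧸ R.G0)) (hS : S.Finite) (hsat : R.Saturated S) (hsym : R.Symm S)
    (hgen : R.RightGenerates S) (hG0 : (R.G0 : Set G).Finite)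
    (hsub : Filter.Tendsto (fun k : ℕ => ((R.ball S R.m0 k).ncard : ℝ) ^ ((1 : ℝ) / k))
      Filter.atTop (nhds 1)) :
    ∀ ε : ℝ, 0 < ε → ∃ k : ℕ, (R.ball S R.m0 k).Nonempty ∧ (R.ball S R.m0 k).Finite ∧
      ∀ s ∈ S,
        ((R.ball S R.m0 k \ (fun m => R.rsa m s) ⁻¹' R.ball S R.m0 k).ncard : ℝ) /
          ((R.ball S R.m0 k).ncard : ℝ) < ε := by
  intro ε hε
  set n : ℕ → ℕ := fun k => (R.ball S R.m0 k).ncard with hn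
  have hfin : ∀ k, (R.ball S R.m0 k).Finite := ball_finite R S hS hsym hgen
  have hne : ∀ k, (R.ball S R.m0 k).Nonempty := fun k => ⟨R.m0, mem_ball_self R S k⟩
  have hpos : ∀ k, 0 < (n k : ℝ) := fun k => by
    exact_mod_cast (Set.ncard_pos (hfin k)).mpr (hne k)
  have hmono : ∀ k, n k ≤ n (k + 1) := fun k =>
    Set.ncard_le_ncard (ball_mono R S (Nat.le_succ k)) (hfin (k + 1))
  have hkey : ∃ k, ((n (k + 1) : ℝ)) < (1 + ε) * n k := by
    by_contra hcon
    push_neg at hcon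
    have hgrow : ∀ k, (1 + ε) ^ k ≤ (n k : ℝ) := by
      intro k
      induction k with
      | zero =>
        simpa [hn] using (Nat.one_le_cast (α := ℝ)).mpr ((Set.ncard_pos (hfin 0)).mpr (hne 0))
      | succ k ih =>
        calc (1 + ε) ^ (k + 1) = (1 + ε) * (1 + ε) ^ k := by ring
          _ ≤ (1 + ε) * n k := by
              exact mul_le_mul_of_nonneg_left ih (by positivity)
          _ ≤ n (k + 1) := hcon k
    have hev : ∀ᶠ k in Filter.atTop, (1 + ε) ≤ (n k : ℝ) ^ ((1 : ℝ) / k) := by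
      filter_upwards [Filter.eventually_ge_atTop 1] with k hk
      have hk0 : (k : ℝ) ≠ 0 := Nat.cast_ne_zero.mpr (by omega)
      have h1 : (((1 + ε) ^ k : ℝ)) ^ ((1 : ℝ) / k) ≤ (n k : ℝ) ^ ((1 : ℝ) / k) :=
        Real.rpow_le_rpow (by positivity) (hgrow k) (by positivity)
      calc (1 + ε) = (((1 + ε) ^ k : ℝ)) ^ ((1 : ℝ) / k) := by
            rw [← Real.rpow_natCast (1 + ε) k, ← Real.rpow_mul (by positivity),
              mul_one_div, div_self hk0, Real.rpow_one]
        _ ≤ _ := h1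
    have hle : (1 + ε) ≤ 1 := ge_of_tendsto hsub hev
    linarith
  obtain ⟨k, hk⟩ := hkey
  refine ⟨k + 1, hne _, hfin _, ?_⟩
  intro s hs
  have hsubset : R.ball S R.m0 (k + 1) \ (fun m => R.rsa m s) ⁻¹' R.ball S R.m0 (k + 1)
      ⊆ R.ball S R.m0 (k + 1) \ R.ball S R.m0 k := by
    rintro m ⟨hm1, hm2⟩
    refine ⟨hm1, fun hmk => hm2 ?_⟩
    show R.rsa m s ∈ R.ball S R.m0 (k + 1)
    rw [mem_ball_iff]
    exact le_trans (dist_rsa_le R S hsym hgen m hs) (Nat.add_le_add_right hmk 1)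
  have h1 : (R.ball S R.m0 (k + 1) \ (fun m => R.rsa m s) ⁻¹'
      R.ball S R.m0 (k + 1)).ncard ≤ n (k + 1) - n k := by
    calc _ ≤ (R.ball S R.m0 (k + 1) \ R.ball S R.m0 k).ncard :=
          Set.ncard_le_ncard hsubset ((hfin (k + 1)).diff)
      _ = n (k + 1) - n k :=
          Set.ncard_diff (ball_mono R S (Nat.le_succ k)) (hfin k)
  have hcast : ((n (k + 1) - n k : ℕ) : ℝ) = (n (k + 1) : ℝ) - n k :=
    Nat.cast_sub (hmono k)
  have hlt : ((R.ball S R.m0 (k + 1) \ (fun m => R.rsa m s) ⁻¹'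
      R.ball S R.m0 (k + 1)).ncard : ℝ) < ε * n (k + 1) := by
    have hmonoR : (n k : ℝ) ≤ n (k + 1) := Nat.cast_le.mpr (hmono k)
    calc ((R.ball S R.m0 (k + 1) \ (fun m => R.rsa m s) ⁻¹'
          R.ball S R.m0 (k + 1)).ncard : ℝ) ≤ (n (k + 1) : ℝ) - n k := by
            rw [← hcast]; exact_mod_cast h1
      _ < ε * n k := by linarith
      _ ≤ ε * n (k + 1) := mul_le_mul_of_nonneg_left hmonoR hε.le
  rw [div_lt_iff₀ (hpos (k + 1))]
  exact hlt
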